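/- (Derivative of a quantum evolution machine.) Let H_1,…,H_J be Hermitian d×d matrices, let H(φ) = Σ_{j=1}^J φ_j H_j for φ ∈ ℝ^J, let ρ₀ be any d×d complex matrix, and define ρ(φ) = e^{−iH(φ)} ρ₀ e^{iH(φ)}. Then for each j ∈ {1,…,J}, the map φ_j ↦ ρ(φ) is differentiable and ∂_j ρ(φ) = i [ρ(φ), Ψ_φ(H_j)], where Ψ_φ(X) = ∫₀¹ e^{−iH(φ)t} X e^{iH(φ)t} dt (a Bochner integral of matrix-valued functions) and [X,Y] = XY − YX. -/

import Mathlib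

noncomputable section PreAux
open MeasureTheory NormedSpace Complex intervalIntegral

variable {E : Type*} [NormedAddCommGroup E] [NormedSpace ℂ E]

theorem myCompOfReal {e : ℂ → E} {e' : E} {z : ℝ} (h : HasDerivAt e e' z) :
    HasDerivAt (fun y : ℝ => e y) e' z := by
  simpa [Function.comp_def] using ((h.hasFDerivAt.restrictScalars ℝ).comp z ofRealCLM.hasFDerivAt).hasDerivAt

variable {A𝔸 : Type*} [NormedRing A𝔸] [NormedAlgebra ℂ A𝔸] [CompleteSpace A𝔸]

theorem expDeriv (A : A𝔸) (c : ℝ) :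
    HasDerivAt (fun t : ℝ => NormedSpace.exp ((t:ℂ) • A)) (NormedSpace.exp ((c:ℂ) • A) * A) c :=
  myCompOfReal (hasDerivAt_exp_smul_const (𝕂 := ℂ) A (c:ℂ))

theorem expDeriv' (A : A𝔸) (c : ℝ) :
    HasDerivAt (fun t : ℝ => NormedSpace.exp ((t:ℂ) • A)) (A * NormedSpace.exp ((c:ℂ) • A)) c :=
  myCompOfReal (hasDerivAt_exp_smul_const' (𝕂 := ℂ) A (c:ℂ))

theorem contExp (A : A𝔸) : Continuous (fun t : ℝ => NormedSpace.exp ((t:ℂ) • A)) :=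
  (letI : NormedAlgebra ℚ A𝔸 := NormedAlgebra.restrictScalars ℚ ℂ A𝔸; exp_continuous).comp (continuous_ofReal.smul continuous_const)

theorem keyIdent (A B : A𝔸) (ε : ℝ) :
    NormedSpace.exp (A + (ε:ℂ) • B) - NormedSpace.exp A =
      ε • ∫ s in (0:ℝ)..1, NormedSpace.exp ((s:ℂ) • (A + (ε:ℂ) • B)) * B * NormedSpace.exp (((1-s:ℝ):ℂ) • A) := by
  set M := A + (ε:ℂ) • B with hM
  have hF : ∀ s : ℝ, HasDerivAt (fun s : ℝ => NormedSpace.exp ((s:ℂ) • M) * NormedSpace.exp (((1-s:ℝ):ℂ) • A))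
      (ε • (NormedSpace.exp ((s:ℂ) • M) * B * NormedSpace.exp (((1-s:ℝ):ℂ) • A))) s := by
    intro s
    have h1 : HasDerivAt (fun s : ℝ => NormedSpace.exp ((s:ℂ) • M)) (NormedSpace.exp ((s:ℂ) • M) * M) s :=
      expDeriv M s
    have h2 : HasDerivAt (fun s : ℝ => NormedSpace.exp (((1-s:ℝ):ℂ) • A))
        ((-1 : ℝ) • (A * NormedSpace.exp (((1-s:ℝ):ℂ) • A))) s := by
      have hlin : HasDerivAt (fun s : ℝ => 1 - s) (-1 : ℝ) s := by
        simpa using (hasDerivAt_id s).const_sub (1:ℝ)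
      exact (expDeriv' A (1-s)).scomp s hlin
    have := h1.mul h2
    convert this using 1
    · rfl
    have hMA : M - A = (ε:ℂ) • B := by rw [hM]; abel
    rw [neg_one_smul, mul_neg, ← sub_eq_add_neg, ← mul_assoc, ← sub_mul, ← mul_sub, hMA,
      mul_smul_comm, smul_mul_assoc]
    exact (Complex.coe_smul ε _).symm
  have hInt : (∫ s in (0:ℝ)..1,
      ε • (NormedSpace.exp ((s:ℂ) • M) * B * NormedSpace.exp (((1-s:ℝ):ℂ) • A))) =
      NormedSpace.exp M - NormedSpace.exp A := by
    rw [integral_eq_sub_of_hasDerivAt (fun s _ => hF s)]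
    · norm_num [NormedSpace.exp_zero]
    · apply Continuous.intervalIntegrable
      exact (((contExp M).mul continuous_const).mul
        ((contExp A).comp (continuous_const.sub continuous_id))).const_smul ε
  rw [← hInt, intervalIntegral.integral_smul]

theorem duhamel0 (A B : A𝔸) :
    HasDerivAt (fun ε : ℝ => NormedSpace.exp (A + (ε:ℂ) • B))
      (∫ s in (0:ℝ)..1, NormedSpace.exp ((s:ℂ) • A) * B * NormedSpace.exp (((1-s:ℝ):ℂ) • A)) 0 := by
  set g : ℝ → A𝔸 := fun ε =>
    ∫ s in (0:ℝ)..1, NormedSpace.exp ((s:ℂ) • (A + (ε:ℂ) • B)) * B * NormedSpace.exp (((1-s:ℝ):ℂ) • A) with hg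
  have hgc : Continuous g := by
    apply intervalIntegral.continuous_parametric_intervalIntegral_of_continuous'
    apply Continuous.mul
    · apply Continuous.mul
      · exact (letI : NormedAlgebra ℚ A𝔸 := NormedAlgebra.restrictScalars ℚ ℂ A𝔸; exp_continuous).comp
          ((continuous_ofReal.comp continuous_snd).smul
            (continuous_const.add ((continuous_ofReal.comp continuous_fst).smul
              continuous_const)))
      · exact continuous_const
    · exact (contExp A).comp (continuous_const.sub continuous_snd)
  have hg0 : g 0 = ∫ s in (0:ℝ)..1, NormedSpace.exp ((s:ℂ) • A) * B * NormedSpace.exp (((1-s:ℝ):ℂ) • A) := by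
    simp [hg]
  rw [hasDerivAt_iff_tendsto_slope]
  have heq : ∀ᶠ ε in nhdsWithin 0 {(0:ℝ)}ᶜ,
      g ε = slope (fun ε : ℝ => NormedSpace.exp (A + (ε:ℂ) • B)) 0 ε := by
    filter_upwards [self_mem_nhdsWithin] with ε (hε : ε ≠ 0)
    rw [slope_def_module, sub_zero]
    have h0 : NormedSpace.exp (A + ((0:ℝ):ℂ) • B) = NormedSpace.exp A := by norm_num
    rw [h0, keyIdent A B ε, smul_smul, inv_mul_cancel₀ hε, one_smul]
  rw [← hg0]
  exact Filter.Tendsto.congr' heq ((hgc.tendsto 0).mono_left nhdsWithin_le_nhds)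

theorem duhamel (A B : A𝔸) (c : ℝ) :
    HasDerivAt (fun x : ℝ => NormedSpace.exp (A + (x:ℂ) • B))
      (∫ s in (0:ℝ)..1, NormedSpace.exp ((s:ℂ) • (A + (c:ℂ) • B)) * B *
        NormedSpace.exp (((1-s:ℝ):ℂ) • (A + (c:ℂ) • B))) c := by
  have h := duhamel0 (A + (c:ℂ) • B) B
  have hshift : HasDerivAt (fun x : ℝ => x - c) (1:ℝ) c := by
    simpa using (hasDerivAt_id c).sub_const c
  have h2 := HasDerivAt.scomp_of_eq (h := fun x : ℝ => x - c) c h hshift (by ring)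
  rw [one_smul] at h2
  convert h2 using 2 with x
  · rfl
  · simp only [Function.comp_apply]
    congr 1
    push_cast
    rw [sub_smul]
    abel

theorem myIntegral_mul_const (f : ℝ → A𝔸) (hf : Continuous f) (C : A𝔸) :
    (∫ s in (0:ℝ)..1, f s * C) = (∫ s in (0:ℝ)..1, f s) * C := by
  have := ((ContinuousLinearMap.mul ℂ A𝔸).flip C).intervalIntegral_comp_comm (μ := volume)
    (hf.intervalIntegrable 0 1)
  simpa using this

theorem myIntegral_const_mul (f : ℝ → A𝔸) (hf : Continuous f) (C : A𝔸) :
    (∫ s in (0:ℝ)..1, C * f s) = C * ∫ s in (0:ℝ)..1, f s := by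
  have := (ContinuousLinearMap.mul ℂ A𝔸 C).intervalIntegral_comp_comm (μ := volume)
    (hf.intervalIntegrable 0 1)
  simpa using this

theorem contChan (Hq K : A𝔸) :
    Continuous (fun t : ℝ => NormedSpace.exp ((-(I*(t:ℂ))) • Hq) * K * NormedSpace.exp ((I*(t:ℂ)) • Hq)) := by
  apply Continuous.mul
  · apply Continuous.mul
    · exact (letI : NormedAlgebra ℚ A𝔸 := NormedAlgebra.restrictScalars ℚ ℂ A𝔸; exp_continuous).comp (((continuous_const.mul continuous_ofReal).neg).smul
        continuous_const)
    · exact continuous_const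
  · exact (letI : NormedAlgebra ℚ A𝔸 := NormedAlgebra.restrictScalars ℚ ℂ A𝔸; exp_continuous).comp ((continuous_const.mul continuous_ofReal).smul continuous_const)

theorem claimU (Hq K : A𝔸) :
    (∫ s in (0:ℝ)..1, NormedSpace.exp ((s:ℂ) • ((-I) • Hq)) * ((-I) • K) *
        NormedSpace.exp (((1-s:ℝ):ℂ) • ((-I) • Hq))) =
      (-I) • ((∫ t in (0:ℝ)..1, NormedSpace.exp ((-(I*(t:ℂ))) • Hq) * K * NormedSpace.exp ((I*(t:ℂ)) • Hq)) *
        NormedSpace.exp ((-I) • Hq)) := by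
  have hpt : ∀ s : ℝ,
      NormedSpace.exp ((s:ℂ) • ((-I) • Hq)) * ((-I) • K) * NormedSpace.exp (((1-s:ℝ):ℂ) • ((-I) • Hq)) =
      (-I) • ((NormedSpace.exp ((-(I*(s:ℂ))) • Hq) * K * NormedSpace.exp ((I*(s:ℂ)) • Hq)) * NormedSpace.exp ((-I) • Hq)) := by
    intro s
    have e1 : (s:ℂ) • ((-I) • Hq) = (-(I*(s:ℂ))) • Hq := by
      rw [smul_smul]; ring_nf
    have e2 : ((1-s:ℝ):ℂ) • ((-I) • Hq) = (I*(s:ℂ)) • Hq + (-I) • Hq := by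
      rw [smul_smul, ← add_smul]; push_cast; ring_nf
    have e3 : NormedSpace.exp ((I*(s:ℂ)) • Hq + (-I) • Hq) =
        NormedSpace.exp ((I*(s:ℂ)) • Hq) * NormedSpace.exp ((-I) • Hq) :=
      (letI : NormedAlgebra ℚ A𝔸 := NormedAlgebra.restrictScalars ℚ ℂ A𝔸; NormedSpace.exp_add_of_commute) (((Commute.refl Hq).smul_left _).smul_right _)
    rw [e1, e2, e3, mul_smul_comm, smul_mul_assoc]
    simp only [mul_assoc]
  rw [intervalIntegral.integral_congr (g := fun s =>
      (-I) • ((NormedSpace.exp ((-(I*(s:ℂ))) • Hq) * K * NormedSpace.exp ((I*(s:ℂ)) • Hq)) * NormedSpace.exp ((-I) • Hq)))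
      (fun s _ => hpt s)]
  rw [intervalIntegral.integral_smul, myIntegral_mul_const _ (contChan Hq K)]

theorem claimV (Hq K : A𝔸) :
    (∫ s in (0:ℝ)..1, NormedSpace.exp ((s:ℂ) • (I • Hq)) * (I • K) *
        NormedSpace.exp (((1-s:ℝ):ℂ) • (I • Hq))) =
      I • (NormedSpace.exp (I • Hq) *
        ∫ t in (0:ℝ)..1, NormedSpace.exp ((-(I*(t:ℂ))) • Hq) * K * NormedSpace.exp ((I*(t:ℂ)) • Hq)) := by
  have hpt : ∀ s : ℝ,
      NormedSpace.exp ((s:ℂ) • (I • Hq)) * (I • K) * NormedSpace.exp (((1-s:ℝ):ℂ) • (I • Hq)) =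
      I • (NormedSpace.exp (I • Hq) * (NormedSpace.exp ((-(I*((1-s:ℝ):ℂ))) • Hq) * K *
        NormedSpace.exp ((I*((1-s:ℝ):ℂ)) • Hq))) := by
    intro s
    have e1 : (s:ℂ) • (I • Hq) = I • Hq + (-(I*((1-s:ℝ):ℂ))) • Hq := by
      rw [smul_smul, ← add_smul]; push_cast; ring_nf
    have e1' : NormedSpace.exp (I • Hq + (-(I*((1-s:ℝ):ℂ))) • Hq) =
        NormedSpace.exp (I • Hq) * NormedSpace.exp ((-(I*((1-s:ℝ):ℂ))) • Hq) :=
      (letI : NormedAlgebra ℚ A𝔸 := NormedAlgebra.restrictScalars ℚ ℂ A𝔸; NormedSpace.exp_add_of_commute) (((Commute.refl Hq).smul_left _).smul_right _)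
    have e2 : ((1-s:ℝ):ℂ) • (I • Hq) = (I*((1-s:ℝ):ℂ)) • Hq := by
      rw [smul_smul]; ring_nf
    rw [e1, e1', e2, mul_smul_comm, smul_mul_assoc]
    simp only [mul_assoc]
  rw [intervalIntegral.integral_congr (g := fun s =>
      I • (NormedSpace.exp (I • Hq) * (NormedSpace.exp ((-(I*((1-s:ℝ):ℂ))) • Hq) * K *
        NormedSpace.exp ((I*((1-s:ℝ):ℂ)) • Hq)))) (fun s _ => hpt s)]
  rw [intervalIntegral.integral_smul]
  congr 1
  rw [myIntegral_const_mul _ (by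
    have : Continuous fun s : ℝ => (1:ℝ) - s := continuous_const.sub continuous_id
    simpa [Function.comp_def, Complex.ofReal_sub] using (contChan Hq K).comp this)]
  congr 1
  have := intervalIntegral.integral_comp_sub_left (a := (0:ℝ)) (b := 1)
    (fun t : ℝ => NormedSpace.exp ((-(I*(t:ℂ))) • Hq) * K * NormedSpace.exp ((I*(t:ℂ)) • Hq)) 1
  simpa using this

set_option maxHeartbeats 2000000 in
theorem mainAux (Hq K ρ₀ : A𝔸) (c : ℝ) :
    HasDerivAt
      (fun x : ℝ => NormedSpace.exp (((-I) • Hq - (c:ℂ) • ((-I) • K)) + (x:ℂ) • ((-I) • K)) * ρ₀ *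
        NormedSpace.exp ((I • Hq - (c:ℂ) • (I • K)) + (x:ℂ) • (I • K)))
      (I • ((NormedSpace.exp ((-I) • Hq) * ρ₀ * NormedSpace.exp (I • Hq)) *
          (∫ t in (0:ℝ)..1, NormedSpace.exp ((-(I*(t:ℂ))) • Hq) * K * NormedSpace.exp ((I*(t:ℂ)) • Hq)) -
        (∫ t in (0:ℝ)..1, NormedSpace.exp ((-(I*(t:ℂ))) • Hq) * K * NormedSpace.exp ((I*(t:ℂ)) • Hq)) *
          (NormedSpace.exp ((-I) • Hq) * ρ₀ * NormedSpace.exp (I • Hq)))) c := by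
  have hA1 : ((-I) • Hq - (c:ℂ) • ((-I) • K)) + (c:ℂ) • ((-I) • K) = (-I) • Hq := by abel
  have hA2 : (I • Hq - (c:ℂ) • (I • K)) + (c:ℂ) • (I • K) = I • Hq := by abel
  have hU := duhamel ((-I) • Hq - (c:ℂ) • ((-I) • K)) ((-I) • K) c
  have hV := duhamel (I • Hq - (c:ℂ) • (I • K)) (I • K) c
  rw [hA1, claimU] at hU
  rw [hA2, claimV] at hV
  have hP := (hU.mul_const ρ₀).mul hV
  rw [hA1, hA2] at hP
  convert hP using 1
  · rfl
  simp only [neg_smul, neg_mul, mul_neg, smul_mul_assoc, mul_smul_comm, smul_sub, mul_assoc]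
  abel

end PreAux


open Matrix MeasureTheory

noncomputable section

attribute [local instance] Matrix.linftyOpNormedAddCommGroup Matrix.linftyOpNormedSpace

/-- Square complex matrices of size `d`. -/
abbrev Mat (d : ℕ) := Matrix (Fin d) (Fin d) ℂ

/-- The Hamiltonian `H(φ) = Σ_{j=1}^J φ_j H_j` of a quantum evolution machine. -/
def qemHam {d : ℕ} (H : ℕ → Mat d) (J : ℕ) (φ : ℕ → ℝ) : Mat d :=
  ∑ j ∈ Finset.Icc 1 J, (φ j : ℂ) • H j

/-- The quantum evolution machine state `ρ(φ) = e^{−iH(φ)} ρ₀ e^{iH(φ)}`. -/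
def qemState {d : ℕ} (H : ℕ → Mat d) (J : ℕ) (ρ₀ : Mat d) (φ : ℕ → ℝ) : Mat d :=
  NormedSpace.exp ((-Complex.I) • qemHam H J φ) * ρ₀ *
    NormedSpace.exp (Complex.I • qemHam H J φ)

/-- The channel `Ψ_φ(X) = ∫₀¹ e^{−iH(φ)t} X e^{iH(φ)t} dt` (a Bochner integral). -/
def qemChan {d : ℕ} (H : ℕ → Mat d) (J : ℕ) (φ : ℕ → ℝ) (X : Mat d) : Mat d :=
  ∫ t in (0 : ℝ)..1,
    NormedSpace.exp ((-(Complex.I * (t : ℂ))) • qemHam H J φ) * X *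
      NormedSpace.exp ((Complex.I * (t : ℂ)) • qemHam H J φ)

/-- Derivative of a quantum evolution machine:
`∂_j ρ(φ) = i [ρ(φ), Ψ_φ(H_j)]`. -/
theorem deriv_qem {d J : ℕ} (hd : 1 ≤ d)
    (H : ℕ → Mat d) (hH : ∀ j, (H j).IsHermitian) (ρ₀ : Mat d)
    (φ : ℕ → ℝ) (j : ℕ) (hj1 : 1 ≤ j) (hjJ : j ≤ J) :
    HasDerivAt (fun x : ℝ => qemState H J ρ₀ (Function.update φ j x))
      (Complex.I •
        (qemState H J ρ₀ φ * qemChan H J φ (H j) - qemChan H J φ (H j) * qemState H J ρ₀ φ))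
      (φ j) := by
  classical
  letI : SeminormedRing (Mat d) := Matrix.linftyOpSemiNormedRing
  letI : NormedRing (Mat d) := Matrix.linftyOpNormedRing
  letI : NormedAlgebra ℂ (Mat d) := Matrix.linftyOpNormedAlgebra
  set c := φ j with hc
  set Hq := qemHam H J φ with hHq
  set K := H j with hK
  have hupd : ∀ x : ℝ, qemHam H J (Function.update φ j x) = Hq + ((x:ℂ) - (c:ℂ)) • K := by
    intro x
    have hsub : qemHam H J (Function.update φ j x) - Hq = ((x:ℂ) - (c:ℂ)) • K := by
      rw [hHq]
      simp only [qemHam, ← Finset.sum_sub_distrib, ← sub_smul]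
      rw [Finset.sum_eq_single j]
      · rw [Function.update_self, hc, hK]
      · intro k _ hkj
        rw [Function.update_of_ne hkj, sub_self, zero_smul]
      · intro hj
        exact absurd (Finset.mem_Icc.mpr ⟨hj1, hjJ⟩) hj
    have := sub_eq_iff_eq_add.mp hsub
    rw [this]; abel
  have hfun : (fun x : ℝ => qemState H J ρ₀ (Function.update φ j x)) =
      fun x : ℝ => NormedSpace.exp
          (((-Complex.I) • Hq - (c:ℂ) • ((-Complex.I) • K)) + (x:ℂ) • ((-Complex.I) • K)) * ρ₀ *
        NormedSpace.exp
          ((Complex.I • Hq - (c:ℂ) • (Complex.I • K)) + (x:ℂ) • (Complex.I • K)) := by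
    funext x
    rw [qemState, hupd x]
    have g1 : (-Complex.I) • (Hq + ((x:ℂ) - (c:ℂ)) • K) =
        ((-Complex.I) • Hq - (c:ℂ) • ((-Complex.I) • K)) + (x:ℂ) • ((-Complex.I) • K) := by
      rw [smul_add, smul_comm, sub_smul]
      abel
    have g2 : Complex.I • (Hq + ((x:ℂ) - (c:ℂ)) • K) =
        (Complex.I • Hq - (c:ℂ) • (Complex.I • K)) + (x:ℂ) • (Complex.I • K) := by
      rw [smul_add, smul_comm, sub_smul]
      abel
    rw [g1, g2]
  rw [hfun]
  simp only [qemState, qemChan, ← hHq, ← hK, ← hc]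
  exact mainAux Hq K ρ₀ c

end
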